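/- Let Y be a sublattice of codimension m in a vector lattice X. Then any pairwise disjoint set of vectors contained in X \ Y has at most 2m elements. -/

import Mathlib

section Helpers

variable {X : Type*} [AddCommGroup X] [Lattice X] [CovariantClass X X (· + ·) (· ≤ ·)]

private lemma myKey1 (u v : X) (huv : u ⊓ v = 0) : (u - v) ⊔ 0 = u := by
  have h1 : (u - v) ⊔ 0 = (u - v) ⊔ (v - v) := by rw [sub_self]
  have h2 : (u - v) ⊔ (v - v) = (u ⊔ v) - v := by
    rw [sub_eq_add_neg, sub_eq_add_neg, ← sup_add, ← sub_eq_add_neg]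
  have h3 : u ⊔ v = u + v := by
    have := inf_add_sup u v
    rw [huv, zero_add] at this
    exact this
  rw [h1, h2, h3]; abel

private lemma myDisjAdd (a b c : X) (ha : 0 ≤ a) (hb : 0 ≤ b) (hc : 0 ≤ c)
    (hac : a ⊓ c = 0) (hbc : b ⊓ c = 0) : (a + b) ⊓ c = 0 := by
  refine le_antisymm ?_ (le_inf (add_nonneg ha hb) hc)
  have step1 : (a + b) ⊓ c ≤ (a ⊓ c) + b := by
    calc (a + b) ⊓ c ≤ (a + b) ⊓ (c + b) :=
          inf_le_inf_left _ (le_add_of_nonneg_right hb)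
      _ = (a ⊓ c) + b := (inf_add a c b).symm
  rw [hac, zero_add] at step1
  calc (a + b) ⊓ c ≤ b ⊓ c := le_inf step1 inf_le_right
    _ = 0 := hbc

private lemma myDisjNsmul (a c : X) (ha : 0 ≤ a) (hc : 0 ≤ c) (hac : a ⊓ c = 0) (n : ℕ) :
    (n • a) ⊓ c = 0 := by
  induction n with
  | zero => rw [zero_smul]; exact inf_eq_left.mpr hc
  | succ k ih => rw [succ_nsmul]; exact myDisjAdd _ _ _ (nsmul_nonneg ha k) ha hc ih hac

private lemma mySumNN {ι : Type*} (t : Finset ι) (f : ι → X) (hf : ∀ i ∈ t, 0 ≤ f i) :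
    0 ≤ ∑ i ∈ t, f i := by
  induction t using Finset.cons_induction with
  | empty => simp
  | cons a t hat ih =>
    rw [Finset.sum_cons]
    exact add_nonneg (hf a (Finset.mem_cons_self a t))
      (ih fun i hi => hf i (Finset.mem_cons_of_mem hi))

private lemma myDisjSum {ι : Type*} (t : Finset ι) (f : ι → X) (c : X)
    (hf : ∀ i ∈ t, 0 ≤ f i) (hc : 0 ≤ c) (hd : ∀ i ∈ t, f i ⊓ c = 0) :
    (∑ i ∈ t, f i) ⊓ c = 0 := by
  induction t using Finset.cons_induction with
  | empty => simpa using inf_eq_left.mpr hc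
  | cons a t hat ih =>
    rw [Finset.sum_cons]
    exact myDisjAdd _ _ _ (hf a (Finset.mem_cons_self a t))
      (mySumNN _ _ fun i hi => hf i (Finset.mem_cons_of_mem hi)) hc
      (hd a (Finset.mem_cons_self a t))
      (ih (fun i hi => hf i (Finset.mem_cons_of_mem hi))
          (fun i hi => hd i (Finset.mem_cons_of_mem hi)))

variable [Module ℝ X] [PosSMulMono ℝ X]

private lemma myDisjSmul (a c : X) (ha : 0 ≤ a) (hc : 0 ≤ c) (hac : a ⊓ c = 0)
    (r : ℝ) (hr : 0 ≤ r) : (r • a) ⊓ c = 0 := by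
  obtain ⟨n, hn⟩ := exists_nat_ge r
  have hra : 0 ≤ r • a := smul_nonneg hr ha
  have hle : r • a ≤ n • a := by
    have h1 : 0 ≤ ((n : ℝ) - r) • a := smul_nonneg (by linarith) ha
    rw [sub_smul, sub_nonneg, Nat.cast_smul_eq_nsmul] at h1
    exact h1
  refine le_antisymm ?_ (le_inf hra hc)
  calc (r • a) ⊓ c ≤ (n • a) ⊓ c := inf_le_inf_right c hle
    _ = 0 := myDisjNsmul a c ha hc hac n

end Helpers

section Core

open Finset

private lemma myCore {ι : Type*} [Fintype ι] [DecidableEq ι] :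
    ∀ (n : ℕ) (A : Finset ι) (W : Submodule ℝ (ι → ℝ)),
      A.card ≤ n →
      (∀ w ∈ W, ∀ i, i ∉ A → w i = 0) →
      (∀ w ∈ W, (fun i => max (w i) 0) ∈ W) →
      (∀ (i : ι) (r : ℝ), Pi.single i r ∈ W → r = 0) →
      2 * Module.finrank ℝ W ≤ A.card := by
  intro n
  induction n with
  | zero =>
    intro A W hcard hsupp hpos hsingle
    have hA : A = ∅ := Finset.card_eq_zero.mp (Nat.le_zero.mp hcard)
    have hW : W = ⊥ := by
      rw [Submodule.eq_bot_iff]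
      intro w hw
      funext i
      exact hsupp w hw i (by simp [hA])
    rw [hW, finrank_bot]
    omega
  | succ n ih =>
    intro A W hcard hsupp hpos hsingle
    classical
    by_cases hW : W = ⊥
    · rw [hW, finrank_bot]; omega
    obtain ⟨w₀, hw₀W, hw₀⟩ := Submodule.exists_mem_ne_zero_of_ne_bot hW
    -- a nonzero nonnegative element exists
    have hexQ : ∃ w : ι → ℝ, w ∈ W ∧ (∀ i, 0 ≤ w i) ∧ w ≠ 0 := by
      by_cases hp : (fun i => max (w₀ i) 0) = 0
      · refine ⟨(fun i => max (-w₀ i) 0), hpos _ (neg_mem hw₀W), fun i => le_max_right _ _, ?_⟩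
        intro hq
        apply hw₀
        funext i
        have h1 : max (w₀ i) 0 = 0 := congrFun hp i
        have h2 : max (-w₀ i) 0 = 0 := congrFun hq i
        have h3 : w₀ i ≤ 0 := by
          by_contra h; push_neg at h
          rw [max_eq_left h.le] at h1; exact h.ne' h1
        have h4 : -w₀ i ≤ 0 := by
          by_contra h; push_neg at h
          rw [max_eq_left h.le] at h2; exact h.ne' h2
        have := neg_nonpos.mp h4
        exact le_antisymm h3 this
      · exact ⟨(fun i => max (w₀ i) 0), hpos _ hw₀W, fun i => le_max_right _ _, hp⟩
    have hexN : ∃ k : ℕ, ∃ w : ι → ℝ,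
        (w ∈ W ∧ (∀ i, 0 ≤ w i) ∧ w ≠ 0) ∧ (A.filter fun i => w i ≠ 0).card = k := by
      obtain ⟨w, hw⟩ := hexQ
      exact ⟨_, w, hw, rfl⟩
    obtain ⟨u, ⟨huW, hunn, hune⟩, huN⟩ := Nat.find_spec hexN
    have hmin : ∀ w : ι → ℝ, w ∈ W → (∀ i, 0 ≤ w i) → w ≠ 0 →
        Nat.find hexN ≤ (A.filter fun i => w i ≠ 0).card := by
      intro w h1 h2 h3
      exact Nat.find_min' hexN ⟨w, ⟨h1, h2, h3⟩, rfl⟩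
    set S : Finset ι := A.filter (fun i => u i ≠ 0) with hSdef
    have husupp : ∀ i, i ∉ S → u i = 0 := by
      intro i hi
      by_cases hiA : i ∈ A
      · by_contra h
        exact hi (Finset.mem_filter.mpr ⟨hiA, h⟩)
      · exact hsupp u huW i hiA
    have hSA : S ⊆ A := Finset.filter_subset _ _
    have hSne : S.Nonempty := by
      rw [Finset.nonempty_iff_ne_empty]
      intro h
      apply hune
      funext i
      exact husupp i (by simp [h])
    have hupos : ∀ s ∈ S, 0 < u s :=
      fun s hs => lt_of_le_of_ne (hunn s) (Ne.symm (Finset.mem_filter.mp hs).2)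
    have hS2 : 2 ≤ S.card := by
      by_contra h
      push_neg at h
      interval_cases hc : S.card
      · exact absurd (Finset.card_eq_zero.mp hc ▸ hSne) (by simp)
      · obtain ⟨i₀, hi₀⟩ := Finset.card_eq_one.mp hc
        have husingle : u = Pi.single i₀ (u i₀) := by
          funext j
          by_cases hj : j = i₀
          · subst hj; rw [Pi.single_eq_same]
          · rw [Pi.single_eq_of_ne hj]
            exact husupp j (by simp [hi₀, hj])
        have := hsingle i₀ (u i₀) (husingle ▸ huW)
        have hi₀S : i₀ ∈ S := by simp [hi₀]
        exact (hupos i₀ hi₀S).ne' this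
    -- closure under pointwise min
    have hinf : ∀ c ∈ W, ∀ d ∈ W, (fun i => min (c i) (d i)) ∈ W := by
      intro c hc d hd
      have h1 := hpos (d - c) (sub_mem hd hc)
      have h2 : (fun i => min (c i) (d i)) = d - (fun i => max ((d - c) i) 0) := by
        funext i
        simp only [Pi.sub_apply]
        rcases le_total (c i) (d i) with h | h
        · rw [min_eq_left h, max_eq_left (by linarith)]; ring
        · rw [min_eq_right h, max_eq_right (by linarith)]; ring
      rw [h2]
      exact sub_mem hd h1
    -- the restriction claim
    have hlam : ∀ w ∈ W, ∃ lam : ℝ, ∀ s ∈ S, w s = lam * u s := by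
      intro w hw
      obtain ⟨i₁, hi₁, hmin₁⟩ := S.exists_min_image (fun s => w s / u s) hSne
      set lam := w i₁ / u i₁ with hlamdef
      set v : ι → ℝ := w - lam • u with hvdef
      have hvW : v ∈ W := sub_mem hw (Submodule.smul_mem W lam huW)
      have hvapp : ∀ i, v i = w i - lam * u i := fun i => rfl
      have hvS : ∀ s ∈ S, 0 ≤ v s := by
        intro s hs
        have h1 : lam ≤ w s / u s := hmin₁ s hs
        have h2 : 0 < u s := hupos s hs
        have h3 : lam * u s ≤ w s := (le_div_iff₀ h2).mp h1
        rw [hvapp]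
        linarith
      have hvi₁ : v i₁ = 0 := by
        rw [hvapp, hlamdef, div_mul_cancel₀ _ (hupos i₁ hi₁).ne', sub_self]
      obtain ⟨s₂, hs₂, hmax₂⟩ := S.exists_max_image (fun s => v s / u s) hSne
      set r := max (v s₂ / u s₂) 1 with hrdef
      have hr0 : 0 ≤ r := le_trans zero_le_one (le_max_right _ _)
      have hvle : ∀ s ∈ S, v s ≤ r * u s := by
        intro s hs
        have h1 : v s / u s ≤ r := le_trans (hmax₂ s hs) (le_max_left _ _)
        exact (div_le_iff₀ (hupos s hs)).mp h1
      have hvpW : (fun i => max (v i) 0) ∈ W := hpos v hvW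
      have hruW : (r • u : ι → ℝ) ∈ W := Submodule.smul_mem W r huW
      set z : ι → ℝ := fun i => min (max (v i) 0) (r * u i) with hzdef
      have hzW : z ∈ W := by
        have := hinf _ hvpW _ hruW
        convert this using 1
        rfl
      have hzS : ∀ s ∈ S, z s = v s := by
        intro s hs
        rw [hzdef]
        simp only
        rw [max_eq_left (hvS s hs), min_eq_left (hvle s hs)]
      have hzoff : ∀ i, i ∉ S → z i = 0 := by
        intro i hi
        have hui : u i = 0 := husupp i hi
        rw [hzdef]
        simp only [hui, mul_zero]
        exact min_eq_right (le_max_right _ _)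
      have hznn : ∀ i, 0 ≤ z i := by
        intro i
        by_cases hi : i ∈ S
        · rw [hzS i hi]; exact hvS i hi
        · rw [hzoff i hi]
      have hz0 : z = 0 := by
        by_contra hz
        have hle := hmin z hzW hznn hz
        have hsub : (A.filter fun i => z i ≠ 0) ⊆ S.erase i₁ := by
          intro i hi
          obtain ⟨hiA, hiz⟩ := Finset.mem_filter.mp hi
          have hiS : i ∈ S := by
            by_contra h
            exact hiz (hzoff i h)
          refine Finset.mem_erase.mpr ⟨?_, hiS⟩
          rintro rfl
          exact hiz (by rw [hzS i hiS, hvi₁])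
        have hcard2 : (A.filter fun i => z i ≠ 0).card ≤ S.card - 1 := by
          have := Finset.card_le_card hsub
          rwa [Finset.card_erase_of_mem hi₁] at this
        omega
      refine ⟨lam, fun s hs => ?_⟩
      have hvs : v s = 0 := by rw [← hzS s hs, hz0]; rfl
      rw [hvapp] at hvs
      linarith
    -- split off one dimension
    obtain ⟨i₀, hi₀⟩ := hSne
    set V : Submodule ℝ (ι → ℝ) :=
      { carrier := {w | ∀ s ∈ S, w s = 0}
        add_mem' := fun {a b} ha hb s hs => by
          simp only [Pi.add_apply, ha s hs, hb s hs, add_zero]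
        zero_mem' := fun s hs => rfl
        smul_mem' := fun c w hw s hs => by
          simp only [Pi.smul_apply, hw s hs, smul_zero] } with hVdef
    have hmemV : ∀ w : ι → ℝ, w ∈ V ↔ ∀ s ∈ S, w s = 0 := fun w => Iff.rfl
    set f : W →ₗ[ℝ] ℝ := (LinearMap.proj i₀).comp W.subtype with hfdef
    have hkerf : LinearMap.ker f = Submodule.comap W.subtype (W ⊓ V) := by
      ext ⟨w, hw⟩
      simp only [LinearMap.mem_ker, hfdef, LinearMap.comp_apply, LinearMap.proj_apply,
        Submodule.coe_subtype, Submodule.mem_comap, Submodule.mem_inf]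
      constructor
      · intro h0
        refine ⟨hw, ?_⟩
        rw [hmemV]
        obtain ⟨lam, hl⟩ := hlam w hw
        have h1 : lam * u i₀ = 0 := by rw [← hl i₀ hi₀]; exact h0
        have hlam0 : lam = 0 := by
          rcases mul_eq_zero.mp h1 with h | h
          · exact h
          · exact absurd h (hupos i₀ hi₀).ne'
        intro s hs
        rw [hl s hs, hlam0, zero_mul]
      · intro ⟨_, h⟩
        exact (hmemV w).mp h i₀ hi₀
    have h1 := LinearMap.finrank_range_add_finrank_ker f
    have h2 : Module.finrank ℝ (LinearMap.range f) ≤ 1 := by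
      have := Submodule.finrank_le (LinearMap.range f)
      rwa [Module.finrank_self] at this
    have h3 : Module.finrank ℝ (LinearMap.ker f) = Module.finrank ℝ (W ⊓ V : Submodule ℝ (ι → ℝ)) := by
      rw [hkerf]
      exact (Submodule.comapSubtypeEquivOfLe inf_le_left).finrank_eq
    have h4 : 2 * Module.finrank ℝ (W ⊓ V : Submodule ℝ (ι → ℝ)) ≤ (A \ S).card := by
      apply ih (A \ S) (W ⊓ V)
      · have := Finset.card_le_card hSA
        rw [Finset.card_sdiff_of_subset hSA]
        omega
      · intro w hw i hi
        rw [Finset.mem_sdiff] at hi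
        push_neg at hi
        by_cases hiA : i ∈ A
        · exact (hmemV w).mp (Submodule.mem_inf.mp hw).2 i (hi hiA)
        · exact hsupp w (Submodule.mem_inf.mp hw).1 i hiA
      · intro w hw
        obtain ⟨hw1, hw2⟩ := Submodule.mem_inf.mp hw
        refine Submodule.mem_inf.mpr ⟨hpos w hw1, ?_⟩
        rw [hmemV]
        intro s hs
        rw [(hmemV w).mp hw2 s hs]
        simp
      · intro i r h
        exact hsingle i r (Submodule.mem_inf.mp h).1
    have h5 : (A \ S).card = A.card - S.card := Finset.card_sdiff_of_subset hSA
    have h6 := Finset.card_le_card hSA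
    omega

end Core

/-- Relative uniform convergence closedness: `A` is uniformly closed if it contains the
limit of every sequence in `A` that converges relatively uniformly (with regulator `e`). -/
def RUClosed {X : Type*} [AddCommGroup X] [Lattice X] [Module ℝ X] (A : Set X) : Prop :=
  ∀ (x : X) (a : ℕ → X) (e : X), 0 ≤ e → (∀ n, a n ∈ A) →
    (∀ ε : ℝ, 0 < ε → ∃ N, ∀ n ≥ N, |a n - x| ≤ ε • e) → x ∈ A

/-- A linear functional is order bounded if it is bounded on every order interval. -/
def OrderBoundedFunc {X : Type*} [AddCommGroup X] [Lattice X] [Module ℝ X]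
    (φ : X →ₗ[ℝ] ℝ) : Prop :=
  ∀ a b : X, ∃ M : ℝ, ∀ x : X, a ≤ x → x ≤ b → |φ x| ≤ M

/-- A submodule is a (vector) sublattice if it is closed under finite suprema. -/
def IsVectorSublattice {X : Type*} [AddCommGroup X] [Lattice X] [Module ℝ X]
    (Y : Submodule ℝ X) : Prop :=
  ∀ x ∈ Y, ∀ y ∈ Y, x ⊔ y ∈ Y

/-- A submodule is an order ideal if it is solid. -/
def IsOrderIdeal {X : Type*} [AddCommGroup X] [Lattice X] [Module ℝ X]
    (J : Submodule ℝ X) : Prop :=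
  ∀ x y : X, |x| ≤ |y| → y ∈ J → x ∈ J

/-- The Archimedean property for a vector lattice. -/
def ArchimedeanVL (X : Type*) [AddCommGroup X] [Lattice X] [Module ℝ X] : Prop :=
  ∀ x y : X, 0 ≤ x → (∀ n : ℕ, n • x ≤ y) → x = 0

theorem stmt15 {X : Type*} [AddCommGroup X] [Lattice X]
    [CovariantClass X X (· + ·) (· ≤ ·)] [Module ℝ X] [PosSMulMono ℝ X] (Y : Submodule ℝ X) (hY : IsVectorSublattice Y)
    (m : ℕ) (hfin : FiniteDimensional ℝ (X ⧸ Y)) (hm : Module.finrank ℝ (X ⧸ Y) = m)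
    (s : Finset X) (hs : ∀ x ∈ s, x ∉ Y)
    (hdisj : (s : Set X).Pairwise fun x y => |x| ⊓ |y| = 0) :
    s.card ≤ 2 * m := by
  classical
  -- choose a positive or negative part outside Y for each element of s
  have hchoice : ∀ i : {x // x ∈ s}, ∃ w : X, 0 ≤ w ∧ w ≤ |i.1| ∧ w ∉ Y := by
    rintro ⟨x, hx⟩
    by_cases h : x ⊔ 0 ∈ Y
    · refine ⟨(-x) ⊔ 0, le_sup_right, sup_le (neg_le_abs x) (abs_nonneg x), ?_⟩
      intro hn
      apply hs x hx
      have hsub := sub_mem h hn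
      have : x ⊔ 0 - ((-x) ⊔ 0) = x := by
        have h1 : x ⊔ 0 = x⁺ := (posPart_def x).symm
        have h2 : (-x) ⊔ 0 = x⁻ := (negPart_def x).symm
        rw [h1, h2, posPart_sub_negPart]
      rwa [this] at hsub
    · exact ⟨x ⊔ 0, le_sup_right, sup_le (le_abs_self x) (abs_nonneg x), h⟩
  choose z hz1 hz2 hz3 using hchoice
  have hzd : ∀ i j : {x // x ∈ s}, i ≠ j → z i ⊓ z j = 0 := by
    intro i j hij
    have hxy : |i.1| ⊓ |j.1| = 0 := hdisj i.2 j.2 (fun h => hij (Subtype.ext h))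
    refine le_antisymm ?_ (le_inf (hz1 i) (hz1 j))
    calc z i ⊓ z j ≤ |i.1| ⊓ |j.1| := inf_le_inf (hz2 i) (hz2 j)
      _ = 0 := hxy
  -- the relation space
  set T : ({x // x ∈ s} → ℝ) →ₗ[ℝ] (X ⧸ Y) :=
    { toFun := fun c => Y.mkQ (∑ i, c i • z i)
      map_add' := by
        intro a b
        show Y.mkQ (∑ i, (a i + b i) • z i) = Y.mkQ (∑ i, a i • z i) + Y.mkQ (∑ i, b i • z i)
        rw [← map_add]
        congr 1
        rw [← Finset.sum_add_distrib]
        congr 1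
        funext i
        rw [add_smul]
      map_smul' := by
        intro r a
        show Y.mkQ (∑ i, (r * a i) • z i) = r • Y.mkQ (∑ i, a i • z i)
        rw [← map_smul]
        congr 1
        rw [Finset.smul_sum]
        congr 1
        funext i
        rw [smul_smul] } with hTdef
  have hTapp : ∀ c, T c = Y.mkQ (∑ i, c i • z i) := fun c => rfl
  set W : Submodule ℝ ({x // x ∈ s} → ℝ) := LinearMap.ker T with hWdef
  -- W is closed under positive parts
  have hWpos : ∀ c ∈ W, (fun i => max (c i) 0) ∈ W := by
    intro c hc
    set u : X := ∑ i, (max (c i) 0) • z i with hudef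
    set v : X := ∑ i, (max (-c i) 0) • z i with hvdef
    have hu0 : 0 ≤ u := mySumNN _ _ (fun i _ => smul_nonneg (le_max_right _ _) (hz1 i))
    have hv0 : 0 ≤ v := mySumNN _ _ (fun i _ => smul_nonneg (le_max_right _ _) (hz1 i))
    have hterm : ∀ i j : {x // x ∈ s},
        ((max (c i) 0) • z i) ⊓ ((max (-c j) 0) • z j) = 0 := by
      intro i j
      by_cases hij : i = j
      · subst hij
        rcases le_total (c i) 0 with h | h
        · rw [max_eq_right h, zero_smul]
          exact inf_eq_left.mpr (smul_nonneg (le_max_right _ _) (hz1 i))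
        · rw [max_eq_right (neg_nonpos.mpr h), zero_smul]
          exact inf_eq_right.mpr (smul_nonneg (le_max_right _ _) (hz1 i))
      · have hzij : z i ⊓ z j = 0 := hzd i j hij
        have hji : z j ⊓ z i = 0 := by rw [inf_comm]; exact hzij
        have h1 : ((max (-c j) 0) • z j) ⊓ z i = 0 :=
          myDisjSmul _ _ (hz1 j) (hz1 i) hji _ (le_max_right _ _)
        have h2 : z i ⊓ ((max (-c j) 0) • z j) = 0 := by rw [inf_comm]; exact h1
        exact myDisjSmul _ _ (hz1 i) (smul_nonneg (le_max_right _ _) (hz1 j)) h2 _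
          (le_max_right _ _)
    have huv : u ⊓ v = 0 := by
      apply myDisjSum _ _ _ (fun i _ => smul_nonneg (le_max_right _ _) (hz1 i)) hv0
      intro i _
      rw [inf_comm]
      apply myDisjSum _ _ _ (fun j _ => smul_nonneg (le_max_right _ _) (hz1 j))
        (smul_nonneg (le_max_right _ _) (hz1 i))
      intro j _
      rw [inf_comm]
      exact hterm i j
    have hdiff : u - v = ∑ i, c i • z i := by
      rw [hudef, hvdef, ← Finset.sum_sub_distrib]
      congr 1
      funext i
      rw [← sub_smul]
      congr 1
      rcases le_total 0 (c i) with h | h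
      · rw [max_eq_left h, max_eq_right (by linarith)]; ring
      · rw [max_eq_right h, max_eq_left (by linarith)]; ring
    have huvY : u - v ∈ Y := by
      rw [← Submodule.ker_mkQ Y, LinearMap.mem_ker, hdiff, ← hTapp]
      exact LinearMap.mem_ker.mp hc
    have huY : u ∈ Y := by
      have h0 := hY (u - v) huvY 0 (zero_mem Y)
      rwa [myKey1 u v huv] at h0
    rw [hWdef, LinearMap.mem_ker, hTapp]
    rw [← Submodule.ker_mkQ Y, LinearMap.mem_ker] at huY
    exact huY
  -- W contains no coordinate vectors
  have hWsingle : ∀ (i : {x // x ∈ s}) (r : ℝ), Pi.single i r ∈ W → r = 0 := by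
    intro i r h
    rw [hWdef, LinearMap.mem_ker, hTapp] at h
    have hsum : (∑ j, (Pi.single i r : {x // x ∈ s} → ℝ) j • z j) = r • z i := by
      rw [Finset.sum_eq_single i]
      · rw [Pi.single_eq_same]
      · intro j _ hj
        rw [Pi.single_eq_of_ne hj, zero_smul]
      · intro h'
        exact absurd (Finset.mem_univ i) h'
    rw [hsum] at h
    by_contra hr
    apply hz3 i
    have hmem : r • z i ∈ Y := by
      rw [← Submodule.ker_mkQ Y, LinearMap.mem_ker]
      exact h
    have := Submodule.smul_mem Y r⁻¹ hmem
    rwa [smul_smul, inv_mul_cancel₀ hr, one_smul] at this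
  -- dimension count
  have hcore := myCore (Finset.univ.card) (Finset.univ : Finset {x // x ∈ s}) W le_rfl
    (fun w _ i hi => absurd (Finset.mem_univ i) hi) hWpos hWsingle
  have hrank := LinearMap.finrank_range_add_finrank_ker T
  have hdom : Module.finrank ℝ ({x // x ∈ s} → ℝ) = s.card := by
    rw [Module.finrank_pi]
    exact Fintype.card_coe s
  have hrange : Module.finrank ℝ (LinearMap.range T) ≤ m := by
    have := Submodule.finrank_le (LinearMap.range T)
    rwa [hm] at this
  have hunivcard : (Finset.univ : Finset {x // x ∈ s}).card = s.card := by
    rw [Finset.card_univ]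
    exact Fintype.card_coe s
  have hWker : Module.finrank ℝ W = Module.finrank ℝ (LinearMap.ker T) := by rw [hWdef]
  rw [hdom] at hrank
  rw [hunivcard] at hcore
  omega
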